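/- With the same notation, if -log L_r(λ) > 1 and r ↦ -log L_r(λ) and λ ↦ -log L_r(λ) are nondecreasing, then L_{2r}(2λ) ≤ exp( -r φ( 2(1 - e^{-1}) λ ) ). -/

import Mathlib

open MeasureTheory Real Set Topology Filter

lemma aux_nonneg (x : ℝ) : 0 ≤ Real.exp (-x) - 1 + x := by
  nlinarith [Real.add_one_le_exp (-x)]

lemma aux_le_min (x : ℝ) (hx : 0 ≤ x) : Real.exp (-x) - 1 + x ≤ min x (x ^ 2) := by
  have h1 : Real.exp (-x) ≤ 1 := by
    rw [Real.exp_le_one_iff]; linarith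
  have h2 : (1 + x) * Real.exp (-x) ≤ 1 := by
    have := Real.add_one_le_exp x
    have hp := Real.exp_pos (-x)
    have : (1 + x) * Real.exp (-x) ≤ Real.exp x * Real.exp (-x) := by nlinarith
    rwa [← Real.exp_add, add_neg_cancel, Real.exp_zero] at this
  refine le_min (by linarith) ?_
  nlinarith [Real.exp_pos (-x)]

lemma aux_bound (l r : ℝ) (hl : 0 ≤ l) (hr : 0 < r) :
    Real.exp (-(l * r)) - 1 + l * r ≤ max l (l ^ 2) * min r (r ^ 2) := by
  have h := aux_le_min (l * r) (by positivity)
  rcases le_total r 1 with h1 | h1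
  · have hmr : min r (r ^ 2) = r ^ 2 := min_eq_right (by nlinarith)
    have : Real.exp (-(l * r)) - 1 + l * r ≤ (l * r) ^ 2 := h.trans (min_le_right _ _)
    rw [hmr]
    nlinarith [le_max_right l (l ^ 2)]
  · have hmr : min r (r ^ 2) = r := min_eq_left (by nlinarith)
    have : Real.exp (-(l * r)) - 1 + l * r ≤ l * r := h.trans (min_le_left _ _)
    rw [hmr]
    nlinarith [le_max_left l (l ^ 2)]

lemma aux_integrable (ν : Measure ℝ) (hν0 : ν (Set.Iic 0) = 0)
    (hνint : Integrable (fun r => min r (r ^ 2)) ν) (l : ℝ) (hl : 0 ≤ l) :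
    Integrable (fun r => Real.exp (-(l * r)) - 1 + l * r) ν := by
  have hae : ∀ᵐ r ∂ν, 0 < r := by
    rw [ae_iff]
    convert hν0 using 2
    ext x; simp [not_lt]
  refine (hνint.const_mul (max l (l ^ 2))).mono' ?_ ?_
  · exact (Continuous.aestronglyMeasurable (by continuity))
  · filter_upwards [hae] with r hr
    rw [Real.norm_eq_abs, abs_of_nonneg (aux_nonneg _)]
    exact aux_bound l r hl hr

lemma psi_convex (α β : ℝ) (hβ : 0 ≤ β)
    (ν : Measure ℝ) (hν0 : ν (Set.Iic 0) = 0)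
    (hνint : Integrable (fun r => min r (r ^ 2)) ν)
    (ψ : ℝ → ℝ)
    (hψ : ∀ l : ℝ, 0 ≤ l →
      ψ l = α * l + β * l ^ 2 + ∫ r, (Real.exp (-(l * r)) - 1 + l * r) ∂ν) :
    ConvexOn ℝ (Set.Ici 0) ψ := by
  refine ⟨convex_Ici 0, ?_⟩
  intro x hx y hy a b ha hb hab
  simp only [smul_eq_mul] at *
  have hx0 : (0:ℝ) ≤ x := hx
  have hy0 : (0:ℝ) ≤ y := hy
  have hz0 : (0:ℝ) ≤ a * x + b * y := by positivity
  rw [hψ _ hz0, hψ _ hx0, hψ _ hy0]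
  have hint : (∫ r, (Real.exp (-((a * x + b * y) * r)) - 1 + (a * x + b * y) * r) ∂ν)
      ≤ ∫ r, (a * (Real.exp (-(x * r)) - 1 + x * r) + b * (Real.exp (-(y * r)) - 1 + y * r)) ∂ν := by
    refine integral_mono (aux_integrable ν hν0 hνint _ hz0)
      (((aux_integrable ν hν0 hνint _ hx0).const_mul a).add
        ((aux_integrable ν hν0 hνint _ hy0).const_mul b)) ?_
    intro r
    have hexp := convexOn_exp.2 (mem_univ (-(x * r))) (mem_univ (-(y * r))) ha hb hab
    simp only [smul_eq_mul] at hexp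
    have : a * -(x * r) + b * -(y * r) = -((a * x + b * y) * r) := by ring
    rw [this] at hexp
    simp only
    nlinarith [hexp]
  rw [integral_add ((aux_integrable ν hν0 hνint _ hx0).const_mul a)
    ((aux_integrable ν hν0 hνint _ hy0).const_mul b),
    integral_const_mul, integral_const_mul] at hint
  have hsq : (a * x + b * y) ^ 2 ≤ a * x ^ 2 + b * y ^ 2 := by
    nlinarith [mul_nonneg ha hb, sq_nonneg (x - y)]
  have := mul_le_mul_of_nonneg_left hsq hβ
  nlinarith [this]

/-- With L_r(λ) = 1 - ψ(κ_r(λ,0))/λ, if -log L_r(λ) > 1 and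
-log L is nondecreasing in each variable, then
L_{2r}(2λ) ≤ exp(-r φ(2(1-e⁻¹)λ)) where φ = ψ' ∘ ψ⁻¹. -/
theorem claim2_large_L (α β : ℝ) (hα : 0 ≤ α) (hβ : 0 ≤ β)
    (ν : Measure ℝ) (hν0 : ν (Set.Iic 0) = 0)
    (hνint : Integrable (fun r => min r (r ^ 2)) ν)
    (ψ ψ' ψinv : ℝ → ℝ) (κ : ℝ → ℝ → ℝ)
    (hψ : ∀ l : ℝ, 0 ≤ l →
      ψ l = α * l + β * l ^ 2 + ∫ r, (Real.exp (-(l * r)) - 1 + l * r) ∂ν)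
    (hext : IntegrableOn (fun u => 1 / ψ u) (Set.Ioi 1))
    (hderiv : ∀ l : ℝ, 0 < l → HasDerivAt ψ (ψ' l) l)
    (hinvpos : ∀ l : ℝ, 0 < l → 0 < ψinv l)
    (hinv₁ : ∀ l : ℝ, 0 ≤ l → ψ (ψinv l) = l)
    (hinv₂ : ∀ l : ℝ, 0 ≤ l → ψinv (ψ l) = l)
    (hκ0 : ∀ l : ℝ, 0 < l → κ 0 l = 0)
    (hκ : ∀ l : ℝ, 0 < l → ∀ r : ℝ, 0 ≤ r →
      HasDerivAt (fun s => κ s l) (l - ψ (κ r l)) r)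
    -- monotonicity of -log L_r(λ) in r and in λ
    (hmono_r : ∀ l : ℝ, 0 < l →
      MonotoneOn (fun r => -Real.log (1 - ψ (κ r l) / l)) (Set.Ici 0))
    (hmono_l : ∀ r : ℝ, 0 ≤ r →
      MonotoneOn (fun l => -Real.log (1 - ψ (κ r l) / l)) (Set.Ioi 0)) :
    ∀ r l : ℝ, 0 < r → 0 < l →
      1 < -Real.log (1 - ψ (κ r l) / l) →
      1 - ψ (κ (2 * r) (2 * l)) / (2 * l) ≤
        Real.exp (-(r * ψ' (ψinv (2 * (1 - Real.exp (-1)) * l)))) := by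
  intro r l hr hl h1
  have hl2 : (0:ℝ) < 2 * l := by linarith
  have hexp1 : Real.exp (-1) < 1 := by
    have : Real.exp (-1) < Real.exp 0 := Real.exp_lt_exp.2 (by norm_num)
    simpa using this
  have hc : 0 < 2 * (1 - Real.exp (-1)) * l := by nlinarith
  have hconv : ConvexOn ℝ (Set.Ici 0) ψ := psi_convex α β hβ ν hν0 hνint ψ hψ
  have hψ0 : ψ 0 = 0 := by rw [hψ 0 le_rfl]; simp
  have hψnn : ∀ x, 0 ≤ x → 0 ≤ ψ x := by
    intro x hx
    rw [hψ x hx]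
    have h1 := integral_nonneg (f := fun r => Real.exp (-(x * r)) - 1 + x * r) (fun r => aux_nonneg (x * r)) (μ := ν)
    have h2 : 0 ≤ α * x := mul_nonneg hα hx
    have h3 : 0 ≤ β * x ^ 2 := mul_nonneg hβ (sq_nonneg x)
    linarith
  have hψmono : ∀ x y, 0 ≤ x → x ≤ y → ψ x ≤ ψ y := by
    intro x y hx hxy
    rcases eq_or_lt_of_le (hx.trans hxy) with hy0 | hy0
    · have : x = y := le_antisymm hxy (by linarith [hx, hy0.symm.le])
      rw [this]
    · set t := x / y with ht
      have ht0 : 0 ≤ t := div_nonneg hx hy0.le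
      have ht1 : t ≤ 1 := div_le_one_of_le₀ hxy hy0.le
      have key := hconv.2 (self_mem_Ici (a := (0:ℝ)))
        (show y ∈ Ici (0:ℝ) from hy0.le) (by linarith : (0:ℝ) ≤ 1 - t) ht0 (by ring)
      simp only [smul_eq_mul, mul_zero, zero_add, hψ0] at key
      have hxy' : t * y = x := by rw [ht]; field_simp
      rw [hxy'] at key
      nlinarith [hψnn y hy0.le]
  have hψ'mono : ∀ x y, 0 < x → x ≤ y → ψ' x ≤ ψ' y := by
    intro x y hx hxy
    rcases eq_or_lt_of_le hxy with heq | hlt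
    · rw [heq]
    · have h1 := hconv.le_slope_of_hasDerivAt (show x ∈ Ici (0:ℝ) from hx.le)
        (show y ∈ Ici (0:ℝ) from (hx.trans_le hxy).le) hlt (hderiv x hx)
      have h2 := hconv.slope_le_of_hasDerivAt (show x ∈ Ici (0:ℝ) from hx.le)
        (show y ∈ Ici (0:ℝ) from (hx.trans_le hxy).le) hlt (hderiv y (hx.trans_le hxy))
      exact h1.trans h2
  -- κ stays nonnegative
  have hκnn : ∀ s, 0 ≤ s → 0 ≤ κ s (2 * l) := by
    intro s₀ hs₀
    by_contra hneg
    push_neg at hneg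
    have hfd : ∀ s, 0 ≤ s → HasDerivAt (fun t => κ t (2 * l)) (2 * l - ψ (κ s (2 * l))) s :=
      hκ (2 * l) hl2
    set T : Set ℝ := Icc 0 s₀ ∩ (fun t => κ t (2 * l)) ⁻¹' (Ici 0) with hT
    have h0T : (0:ℝ) ∈ T := ⟨⟨le_rfl, hs₀⟩, by simp [hκ0 (2 * l) hl2]⟩
    have hbdd : BddAbove T := BddAbove.mono inter_subset_left bddAbove_Icc
    have hcont : ContinuousOn (fun t => κ t (2 * l)) (Icc 0 s₀) :=
      fun x hx => ((hfd x hx.1).continuousAt).continuousWithinAt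
    have hclosed : IsClosed T := hcont.preimage_isClosed_of_isClosed isClosed_Icc isClosed_Ici
    set t := sSup T with htdef
    have htT : t ∈ T := hclosed.csSup_mem ⟨0, h0T⟩ hbdd
    obtain ⟨⟨ht0, hts⟩, htf⟩ := htT
    have htf' : 0 ≤ κ t (2 * l) := htf
    have htlt : t < s₀ := lt_of_le_of_ne hts (by
      intro h; rw [h] at htf'; exact absurd htf' (not_le.2 hneg))
    have hex : ∃ s, 0 < κ s (2 * l) ∧ s ∈ Ioo t s₀ := by
      rcases eq_or_lt_of_le htf' with heq | hpos
      · have hd := hfd t ht0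
        rw [← heq, hψ0, sub_zero] at hd
        rw [hasDerivAt_iff_tendsto_slope] at hd
        have hd2 := hd.mono_left (nhdsWithin_mono t
          (fun u (hu : u ∈ Ioi t) => (mem_compl_singleton_iff).2 hu.ne'))
        have hev : ∀ᶠ u in 𝓝[>] t, 0 < slope (fun t => κ t (2 * l)) t u :=
          hd2.eventually (lt_mem_nhds hl2)
        have hev2 : Ioo t s₀ ∈ 𝓝[>] t := Ioo_mem_nhdsGT_of_mem ⟨le_rfl, htlt⟩
        obtain ⟨s, hslope, hsIoo⟩ := (hev.and hev2).exists
        refine ⟨s, ?_, hsIoo⟩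
        rw [slope_def_field] at hslope
        have hst : 0 < s - t := sub_pos.2 hsIoo.1
        rcases div_pos_iff.1 hslope with ⟨h, _⟩ | ⟨_, h⟩
        · rw [← heq] at h; linarith
        · linarith
      · have hev : ∀ᶠ u in 𝓝 t, 0 < κ u (2 * l) :=
          ((hfd t ht0).continuousAt).eventually (lt_mem_nhds hpos)
        have hev2 : Ioo t s₀ ∈ 𝓝[>] t := Ioo_mem_nhdsGT_of_mem ⟨le_rfl, htlt⟩
        obtain ⟨s, hf, hsIoo⟩ := ((hev.filter_mono nhdsWithin_le_nhds).and hev2).exists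
        exact ⟨s, hf, hsIoo⟩
    obtain ⟨s, hspos, hsIoo⟩ := hex
    have hsT : s ∈ T := ⟨⟨ht0.trans hsIoo.1.le, hsIoo.2.le⟩, hspos.le⟩
    exact absurd (le_csSup hbdd hsT) (not_le.2 hsIoo.1)
  -- the -log L function is > 1 on [r, 2r]
  have hGmono : ∀ s ∈ Icc r (2 * r), 1 < -Real.log (1 - ψ (κ s (2 * l)) / (2 * l)) := by
    intro s hs
    have step1 := hmono_l r hr.le (show l ∈ Ioi (0:ℝ) from hl)
      (show 2 * l ∈ Ioi (0:ℝ) from hl2) (by linarith)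
    have step2 := hmono_r (2 * l) hl2 (show r ∈ Ici (0:ℝ) from hr.le)
      (show s ∈ Ici (0:ℝ) from (hr.le.trans hs.1)) hs.1
    simp only at step1 step2
    linarith
  -- consequences: L ≠ 0 and ψ(κ) ≥ c on [r,2r]
  have hB : ∀ s ∈ Icc r (2 * r), (1 - ψ (κ s (2 * l)) / (2 * l)) ≠ 0 ∧
      2 * (1 - Real.exp (-1)) * l ≤ ψ (κ s (2 * l)) := by
    intro s hs
    have hGs := hGmono s hs
    set u := 1 - ψ (κ s (2 * l)) / (2 * l) with hu
    have hu0 : u ≠ 0 := by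
      intro h; rw [h] at hGs; simp [Real.log_zero] at hGs; linarith
    have hlogu : Real.log |u| < -1 := by rw [Real.log_abs]; linarith
    have habs : |u| < Real.exp (-1) := (Real.log_lt_iff_lt_exp (abs_pos.2 hu0)).1 hlogu
    have huu : u < Real.exp (-1) := (le_abs_self u).trans_lt habs
    refine ⟨hu0, ?_⟩
    rw [hu] at huu
    have hdiv : 1 - Real.exp (-1) < ψ (κ s (2 * l)) / (2 * l) := by linarith
    have h' := (lt_div_iff₀ hl2).1 hdiv
    nlinarith
  -- lower bound for κ on [r,2r]
  have hκa : ∀ s ∈ Icc r (2 * r), ψinv (2 * (1 - Real.exp (-1)) * l) ≤ κ s (2 * l) := by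
    intro s hs
    have hκs0 : 0 ≤ κ s (2 * l) := hκnn s (hr.le.trans hs.1)
    by_contra hcon
    push_neg at hcon
    have hle : ψ (κ s (2 * l)) ≤ ψ (ψinv (2 * (1 - Real.exp (-1)) * l)) :=
      hψmono _ _ hκs0 hcon.le
    rw [hinv₁ _ hc.le] at hle
    have hge := (hB s hs).2
    have heq : ψ (κ s (2 * l)) = 2 * (1 - Real.exp (-1)) * l := le_antisymm hle hge
    have : κ s (2 * l) = ψinv (2 * (1 - Real.exp (-1)) * l) := by
      rw [← hinv₂ _ hκs0, heq]
    linarith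
  have hapos : 0 < ψinv (2 * (1 - Real.exp (-1)) * l) := hinvpos _ hc
  -- derivative of -log L
  have hG' : ∀ s ∈ Icc r (2 * r),
      HasDerivAt (fun t : ℝ => -Real.log (1 - ψ (κ t (2 * l)) / (2 * l)))
        (ψ' (κ s (2 * l))) s := by
    intro s hs
    have hκpos : 0 < κ s (2 * l) := hapos.trans_le (hκa s hs)
    have hu0 := (hB s hs).1
    have hk : HasDerivAt (fun t => κ t (2 * l)) (2 * l - ψ (κ s (2 * l))) s :=
      hκ (2 * l) hl2 s (hr.le.trans hs.1)
    have hcomp : HasDerivAt (fun t => ψ (κ t (2 * l)))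
        (ψ' (κ s (2 * l)) * (2 * l - ψ (κ s (2 * l)))) s :=
      (hderiv _ hκpos).comp s hk
    have hu : HasDerivAt (fun t => 1 - ψ (κ t (2 * l)) / (2 * l))
        (-(ψ' (κ s (2 * l)) * (2 * l - ψ (κ s (2 * l))) / (2 * l))) s :=
      (hcomp.div_const (2 * l)).const_sub 1
    have hlog : HasDerivAt (fun t => Real.log (1 - ψ (κ t (2 * l)) / (2 * l)))
        ((1 - ψ (κ s (2 * l)) / (2 * l))⁻¹ *
          (-(ψ' (κ s (2 * l)) * (2 * l - ψ (κ s (2 * l))) / (2 * l)))) s :=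
      by have := (Real.hasDerivAt_log hu0).comp s hu; exact this
    have hfinal : HasDerivAt (fun t : ℝ => -Real.log (1 - ψ (κ t (2 * l)) / (2 * l)))
        (-((1 - ψ (κ s (2 * l)) / (2 * l))⁻¹ *
          (-(ψ' (κ s (2 * l)) * (2 * l - ψ (κ s (2 * l))) / (2 * l))))) s := hlog.neg
    convert hfinal using 1
    have hnum : (2 * l - ψ (κ s (2 * l))) / (2 * l) = 1 - ψ (κ s (2 * l)) / (2 * l) := by
      field_simp
    rw [mul_div_assoc, hnum]
    rw [mul_neg, neg_neg, mul_comm (1 - ψ (κ s (2 * l)) / (2 * l))⁻¹, mul_assoc,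
      mul_inv_cancel₀ hu0, mul_one]
  -- monotonicity of -log L - φc * s on [r, 2r]
  set A := ψ' (ψinv (2 * (1 - Real.exp (-1)) * l)) with hA
  have hHmono : MonotoneOn
      (fun s => -Real.log (1 - ψ (κ s (2 * l)) / (2 * l)) - A * s) (Icc r (2 * r)) := by
    have hlin : ∀ x : ℝ, HasDerivAt (fun s : ℝ => A * s) A x := by
      intro x
      simpa using (hasDerivAt_id x).const_mul A
    apply monotoneOn_of_hasDerivWithinAt_nonneg (convex_Icc r (2 * r))
      (f' := fun x => ψ' (κ x (2 * l)) - A)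
    · intro x hx
      exact (((hG' x hx).sub (hlin x)).continuousAt).continuousWithinAt
    · intro x hx
      rw [interior_Icc] at hx
      exact (((hG' x (Ioo_subset_Icc_self hx)).sub (hlin x)).hasDerivWithinAt).mono
        interior_subset
    · intro x hx
      rw [interior_Icc] at hx
      have := hψ'mono _ _ hapos (hκa x (Ioo_subset_Icc_self hx))
      linarith
  have hr2 : r ≤ 2 * r := by linarith
  have hmem1 : r ∈ Icc r (2 * r) := ⟨le_rfl, hr2⟩
  have hmem2 : 2 * r ∈ Icc r (2 * r) := ⟨hr2, le_rfl⟩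
  have hHle := hHmono hmem1 hmem2 hr2
  simp only at hHle
  have hGr : 1 < -Real.log (1 - ψ (κ r (2 * l)) / (2 * l)) := hGmono r hmem1
  have hfin : r * A ≤ -Real.log (1 - ψ (κ (2 * r) (2 * l)) / (2 * l)) := by nlinarith
  rcases le_or_gt (1 - ψ (κ (2 * r) (2 * l)) / (2 * l)) 0 with hU | hU
  · exact hU.trans (Real.exp_pos _).le
  · calc 1 - ψ (κ (2 * r) (2 * l)) / (2 * l)
        = Real.exp (Real.log (1 - ψ (κ (2 * r) (2 * l)) / (2 * l))) := (Real.exp_log hU).symm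
      _ ≤ Real.exp (-(r * A)) := Real.exp_le_exp.2 (by linarith)
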